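/- Let e ≥ 3 and 0 < a < b < c ≤ d ≤ e, and let B be the block of e-weight 4 with notation ⟨4^a, 5^{b−a}, 6^{c−b}, 5^{d−c}, 4^{e−d}⟩, which forms exactly two [4:1]-pairs, via the residues carried by runner a and by runner b respectively. If a partition λ lying in B is exceptional for both pairs, then b − a ≥ 2 and λ = ⟨a_{(1,1)}, b_{(1,1)}⟩. -/

import Mathlib

/-- A partition: a weakly decreasing function `parts : ℕ → ℕ` (0-indexed),
having exactly `len` nonzero parts. -/
structure AbacusPartition where
  parts : ℕ → ℕ
  antitone : Antitone parts
  len : ℕ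
  pos_of_lt : ∀ i, i < len → 0 < parts i
  zero_of_ge : ∀ i, len ≤ i → parts i = 0

/-- The beta-set (abacus display) of a partition with `r` beads:
positions `λ_i + r - i` for `1 ≤ i ≤ r` (0-indexed: `parts i + (r - 1 - i)`). -/
def AbacusPartition.betaSet (lam : AbacusPartition) (r : ℕ) : Finset ℕ :=
  (Finset.range r).image (fun i => lam.parts i + (r - 1 - i))

/-- e-weight of the bead at position `p` of the display `B`: the number of
unoccupied positions `q < p` with `q ≡ p (mod e)`. -/
def beadWeight (e : ℕ) (B : Finset ℕ) (p : ℕ) : ℕ :=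
  ((Finset.range p).filter (fun q => q % e = p % e ∧ q ∉ B)).card

/-- Total e-weight of the display `B`. -/
def abacusWeight (e : ℕ) (B : Finset ℕ) : ℕ :=
  B.sum (fun p => beadWeight e B p)

/-- e-weight of a partition (computed from the display with `lam.len` beads). -/
def eWeight (e : ℕ) (lam : AbacusPartition) : ℕ :=
  abacusWeight e (lam.betaSet lam.len)

/-- Positions on runner `res` (positions `p` with `p % e = res`), in increasing
order, up to a bound strictly beyond every bead. -/
def posList (e : ℕ) (B : Finset ℕ) (res : ℕ) : List ℕ :=
  (List.range (B.sup id + e + 2)).filter (fun p => p % e == res)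

/-- One step of the signature-reduction automaton; the state is
`(list of surviving '+' positions, stack of pending '−' positions)`.
A '−' occurs at `p` when `p` is occupied and its preceding position unoccupied
(position `-1` counts as occupied); a '+' occurs at `p` when `p` is unoccupied
and its preceding position occupied.  A '+' cancels the most recent pending '−'. -/
def signStep (B : Finset ℕ) (st : List ℕ × List ℕ) (p : ℕ) : List ℕ × List ℕ :=
  if p ∈ B ∧ ¬(p = 0 ∨ p - 1 ∈ B) then (st.1, p :: st.2)
  else if p ∉ B ∧ (p = 0 ∨ p - 1 ∈ B) then
    (match st.2 with
     | [] => (p :: st.1, ([] : List ℕ))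
     | _ :: tl => (st.1, tl))
  else st

/-- Final state of the reduction of the `j`-signature on runner `res`:
`(surviving '+' (conormal) positions, surviving '−' (normal) positions)`,
each list in decreasing order of position. -/
def signState (e : ℕ) (B : Finset ℕ) (res : ℕ) : List ℕ × List ℕ :=
  (posList e B res).foldl (signStep B) ([], [])

/-- Positions of the normal beads on runner `res`, in decreasing order. -/
def normalList (e : ℕ) (B : Finset ℕ) (res : ℕ) : List ℕ := (signState e B res).2

/-- The conormal positions on runner `res`, in decreasing order. -/
def conormalList (e : ℕ) (B : Finset ℕ) (res : ℕ) : List ℕ := (signState e B res).1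

/-- ε: the number of normal beads on runner `res`. -/
def epsB (e : ℕ) (B : Finset ℕ) (res : ℕ) : ℕ := (normalList e B res).length

/-- φ: the number of conormal positions on runner `res`. -/
def phiB (e : ℕ) (B : Finset ℕ) (res : ℕ) : ℕ := (conormalList e B res).length

/-- ε_j of a partition: in the display with `lam.len` beads, residue `j`
is carried by runner `(j + lam.len) % e`. -/
def epsP (e : ℕ) (lam : AbacusPartition) (j : ℕ) : ℕ :=
  epsB e (lam.betaSet lam.len) ((j + lam.len) % e)

/-- φ_j of a partition. -/
def phiP (e : ℕ) (lam : AbacusPartition) (j : ℕ) : ℕ :=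
  phiB e (lam.betaSet lam.len) ((j + lam.len) % e)

/-- Move each bead in `ps` from its position `p` to `p - 1`. -/
def moveDown (B : Finset ℕ) (ps : List ℕ) : Finset ℕ :=
  ps.foldl (fun C p => insert (p - 1) (C.erase p)) B

/-- For each position `p` in `ps`, move the bead at `p - 1` to `p`. -/
def moveUp (B : Finset ℕ) (ps : List ℕ) : Finset ℕ :=
  ps.foldl (fun C p => insert p (C.erase (p - 1))) B

/-- Ẽ^t on displays: move the `t` normal beads at the smallest positions down. -/
def Etil (e : ℕ) (B : Finset ℕ) (res t : ℕ) : Finset ℕ :=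
  moveDown B ((normalList e B res).reverse.take t)

/-- F̃^t on displays: for the `t` largest conormal positions `p`,
move the bead at `p - 1` to `p`. -/
def Ftil (e : ℕ) (B : Finset ℕ) (res t : ℕ) : Finset ℕ :=
  moveUp B ((conormalList e B res).take t)

/-- Number of beads of `B` on runner `i`. -/
def runnerCount (e : ℕ) (B : Finset ℕ) (i : ℕ) : ℕ :=
  (B.filter (fun p => p % e = i)).card

/-- Sum of the e-weights of the beads of `B` on runner `i` (this is `|λ(i)|`). -/
def runnerWeight (e : ℕ) (B : Finset ℕ) (i : ℕ) : ℕ :=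
  (B.filter (fun p => p % e = i)).sum (beadWeight e B)

/-- The display of the e-core: slide every bead as far up its runner as possible. -/
def coreBeta (e : ℕ) (B : Finset ℕ) : Finset ℕ :=
  (Finset.range e).biUnion
    (fun i => (Finset.range (runnerCount e B i)).image (fun m => i + m * e))

/-- `lam` lies in the block with bead counts `bd 0, …, bd (e-1)` and e-weight `w`:
displayed with `r = bd 0 + ⋯ + bd (e-1)` beads it has `bd i` beads on runner `i`
and e-weight `w`. -/
def inBlock (e : ℕ) (bd : ℕ → ℕ) (w : ℕ) (lam : AbacusPartition) : Prop :=
  lam.len ≤ (Finset.range e).sum bd ∧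
  (∀ i < e, runnerCount e (lam.betaSet ((Finset.range e).sum bd)) i = bd i) ∧
  abacusWeight e (lam.betaSet ((Finset.range e).sum bd)) = w

/-- The single-runner beta-set of the partition with parts `ρ` and `c` beads. -/
def oneRunnerBeta (rho : List ℕ) (c : ℕ) : Finset ℕ :=
  (Finset.range c).image (fun t => rho.getD t 0 + (c - 1 - t))

/-- The display of the partition `⟨0_{lamOf 0}, …, (e−1)_{lamOf (e−1)} | bd 0, …, bd (e−1)⟩`. -/
def display (e : ℕ) (bd : ℕ → ℕ) (lamOf : ℕ → List ℕ) : Finset ℕ :=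
  (Finset.range e).biUnion
    (fun i => (oneRunnerBeta (lamOf i) (bd i)).image (fun m => i + m * e))

/-- The operator Ḟ at runner `res`: apply F̃^{φ} (valid when ε = 0 < φ). -/
def dotF (e : ℕ) (B : Finset ℕ) (res : ℕ) : Finset ℕ := Ftil e B res (phiB e B res)

/-- Apply a chain of Ḟ steps. -/
def chainFold (e : ℕ) : Finset ℕ → List ℕ → Finset ℕ
  | B, [] => B
  | B, i :: rest => chainFold e (dotF e B i) rest

/-- The chain of Ḟ steps is semisimple: at each step ε = 0 before, φ > 0 before,
and φ = 0 afterwards. -/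
def validChain (e : ℕ) : Finset ℕ → List ℕ → Prop
  | _, [] => True
  | B, i :: rest =>
      (epsB e B i = 0 ∧ 0 < phiB e B i ∧ phiB e (dotF e B i) i = 0) ∧
      validChain e (dotF e B i) rest

/-- `B` induces semisimply to `C` (displays with the same number of beads). -/
def InducesSS (e : ℕ) (B C : Finset ℕ) : Prop :=
  ∃ L : List ℕ, validChain e B L ∧ chainFold e B L = C

/-- Re-display a beta-set with `s` additional beads. -/
def shiftBeta (B : Finset ℕ) (s : ℕ) : Finset ℕ :=
  B.image (· + s) ∪ Finset.range s

/-- `B` induces semisimply to the partition displayed by `C` (where `C` may use a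
different number of beads). -/
def InducesToPartition (e : ℕ) (B C : Finset ℕ) : Prop :=
  ∃ D : Finset ℕ, InducesSS e B D ∧ shiftBeta D C.card = shiftBeta C D.card

/-- The block with bead counts `bd` and weight `w` is Rouquier:
for all `i < j < e`, `bd i − bd j ≥ w` or `bd j − bd i ≥ w − 1`. -/
def IsRouquier (e w : ℕ) (bd : ℕ → ℕ) : Prop :=
  ∀ i j, i < j → j < e → bd j + w ≤ bd i ∨ bd i + (w - 1) ≤ bd j

/-- `lam` is e-singular: it has `e` consecutive equal nonzero parts. -/
def ESingular (e : ℕ) (lam : AbacusPartition) : Prop :=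
  ∃ i, lam.parts i ≠ 0 ∧ ∀ m < e, lam.parts (i + m) = lam.parts i

/-- `lam` is e-regular. -/
def ERegular (e : ℕ) (lam : AbacusPartition) : Prop := ¬ ESingular e lam

/-- The induced e-sequence of the display `B`, as a multiset: each bead of
positive weight `w` at position `p` contributes `p, p−e, …, p−(w−1)e`. -/
def inducedSeq (e : ℕ) (B : Finset ℕ) : Multiset ℕ :=
  B.val.bind (fun p => (Multiset.range (beadWeight e B p)).map (fun m => p - m * e))

/-- The product order: `lam ≤_P mu` iff they have the same e-core and e-weight and
`s(mu)_r ≥ s(lam)_r` componentwise for all sufficiently large `r`. -/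
def ProdLE (e : ℕ) (lam mu : AbacusPartition) : Prop :=
  (∃ r, lam.len ≤ r ∧ mu.len ≤ r ∧
    coreBeta e (lam.betaSet r) = coreBeta e (mu.betaSet r)) ∧
  eWeight e lam = eWeight e mu ∧
  ∃ r0, ∀ r, r0 ≤ r →
    List.Forall₂ (· ≤ ·) ((inducedSeq e (lam.betaSet r)).sort (· ≤ ·))
      ((inducedSeq e (mu.betaSet r)).sort (· ≤ ·))


def wRows (S : Finset ℕ) : ℕ := S.sum (fun m => ((Finset.range m).filter (fun q => q ∉ S)).card)

def rowsOf (e : ℕ) (B : Finset ℕ) (i : ℕ) : Finset ℕ :=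
  (Finset.range (B.sup id + 1)).filter (fun m => i + m * e ∈ B)

lemma mem_rowsOf {e : ℕ} (he : 0 < e) {B : Finset ℕ} {i m : ℕ} :
    m ∈ rowsOf e B i ↔ i + m * e ∈ B := by
  unfold rowsOf
  simp only [Finset.mem_filter, Finset.mem_range]
  constructor
  · exact fun h => h.2
  · intro h
    refine ⟨?_, h⟩
    have h1 : id (i + m * e) ≤ B.sup id := Finset.le_sup h
    have h2 : m ≤ m * e := Nat.le_mul_of_pos_right m he
    simp only [id] at h1
    omega

lemma runner_filter_eq {e i : ℕ} (he : 0 < e) (hi : i < e) (B : Finset ℕ) :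
    B.filter (fun p => p % e = i) = (rowsOf e B i).image (fun m => i + m * e) := by
  ext p
  simp only [Finset.mem_filter, Finset.mem_image, mem_rowsOf he]
  constructor
  · rintro ⟨hp, hmod⟩
    have hd := Nat.div_add_mod p e
    have hc : e * (p / e) = (p / e) * e := Nat.mul_comm _ _
    have hpe : i + p / e * e = p := by omega
    exact ⟨p / e, by rwa [hpe], hpe⟩
  · rintro ⟨m, hm, rfl⟩
    exact ⟨hm, by rw [Nat.add_mul_mod_self_right, Nat.mod_eq_of_lt hi]⟩

lemma runner_inj {e : ℕ} (he : 0 < e) (i : ℕ) :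
    Function.Injective (fun m : ℕ => i + m * e) := by
  intro x y h
  simp only at h
  have : x * e = y * e := by omega
  exact Nat.eq_of_mul_eq_mul_right he this

lemma card_rowsOf {e i : ℕ} (he : 0 < e) (hi : i < e) (B : Finset ℕ) :
    (rowsOf e B i).card = runnerCount e B i := by
  unfold runnerCount
  rw [runner_filter_eq he hi, Finset.card_image_of_injective _ (runner_inj he i)]

lemma beadWeight_eq {e i : ℕ} (he : 0 < e) (hi : i < e) (B : Finset ℕ) (m : ℕ) :
    beadWeight e B (i + m * e) = ((Finset.range m).filter (fun q => q ∉ rowsOf e B i)).card := by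
  unfold beadWeight
  have himg : (Finset.range (i + m * e)).filter (fun q => q % e = (i + m * e) % e ∧ q ∉ B)
      = ((Finset.range m).filter (fun q => q ∉ rowsOf e B i)).image (fun m' => i + m' * e) := by
    have hmod : (i + m * e) % e = i := by rw [Nat.add_mul_mod_self_right, Nat.mod_eq_of_lt hi]
    ext q
    simp only [Finset.mem_filter, Finset.mem_range, Finset.mem_image, hmod, mem_rowsOf he]
    constructor
    · rintro ⟨hq, hqm, hqB⟩
      have hd := Nat.div_add_mod q e
      have hc : e * (q / e) = (q / e) * e := Nat.mul_comm _ _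
      refine ⟨q / e, ⟨?_, ?_⟩, ?_⟩
      · -- q / e < m
        have : (q / e) * e < m * e := by omega
        exact Nat.lt_of_mul_lt_mul_right this
      · intro hb; apply hqB; have : i + q / e * e = q := by omega
        rwa [this] at hb
      · omega
    · rintro ⟨m', ⟨hm', hB⟩, rfl⟩
      refine ⟨?_, by rw [Nat.add_mul_mod_self_right, Nat.mod_eq_of_lt hi], hB⟩
      have : m' * e < m * e := (Nat.mul_lt_mul_right he).2 hm'
      omega
  rw [himg, Finset.card_image_of_injective _ (runner_inj he i)]

lemma runnerSum {e i : ℕ} (he : 0 < e) (hi : i < e) (B : Finset ℕ) :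
    (B.filter (fun p => p % e = i)).sum (beadWeight e B) = wRows (rowsOf e B i) := by
  rw [runner_filter_eq he hi, Finset.sum_image (fun x _ y _ h => runner_inj he i h)]
  unfold wRows
  exact Finset.sum_congr rfl (fun m _ => beadWeight_eq he hi B m)

lemma weight_decomp {e : ℕ} (he : 0 < e) (B : Finset ℕ) :
    abacusWeight e B = ∑ i ∈ Finset.range e, wRows (rowsOf e B i) := by
  unfold abacusWeight
  rw [← Finset.sum_fiberwise_of_maps_to (g := fun p => p % e)
    (fun p _ => Finset.mem_range.2 (Nat.mod_lt p he))]
  exact Finset.sum_congr rfl (fun i hi => runnerSum he (Finset.mem_range.1 hi) B)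
def rstep (T S : Finset ℕ) (st : ℕ × ℕ) (m : ℕ) : ℕ × ℕ :=
  if m ∈ S ∧ ¬ m ∈ T then (st.1, st.2 + 1)
  else if m ∉ S ∧ m ∈ T then
    (match st.2 with
     | 0 => (st.1 + 1, 0)
     | Nat.succ t => (st.1, t))
  else st

def eps2 (T S : Finset ℕ) (M : ℕ) : ℕ := ((List.range M).foldl (rstep T S) (0, 0)).2

lemma sim {e res : ℕ} (he : 0 < e) (h0 : 0 < res) (hre : res < e) (B : Finset ℕ) :
    ∀ (L : List ℕ), (∀ p ∈ L, p % e = res) → ∀ (st : List ℕ × List ℕ),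
      ((L.foldl (signStep B) st).1.length, (L.foldl (signStep B) st).2.length)
        = (L.map (· / e)).foldl (rstep (rowsOf e B (res - 1)) (rowsOf e B res))
            (st.1.length, st.2.length) := by
  intro L
  induction L with
  | nil => intro _ st; simp
  | cons p L ih =>
    intro hL st
    have hp : p % e = res := hL p List.mem_cons_self
    simp only [List.foldl_cons, List.map_cons]
    rw [ih (fun q hq => hL q (List.mem_cons_of_mem _ hq))]
    have hstep : ((signStep B st p).1.length, (signStep B st p).2.length)
        = rstep (rowsOf e B (res - 1)) (rowsOf e B res) (st.1.length, st.2.length) (p / e) := by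
      have hd := Nat.div_add_mod p e
      have hc : e * (p / e) = (p / e) * e := Nat.mul_comm _ _
      have hpne : ¬ p = 0 := by omega
      have h1 : p ∈ B ↔ p / e ∈ rowsOf e B res := by
        rw [mem_rowsOf he]
        have : res + p / e * e = p := by omega
        rw [this]
      have h2 : p - 1 ∈ B ↔ p / e ∈ rowsOf e B (res - 1) := by
        rw [mem_rowsOf he]
        have : res - 1 + p / e * e = p - 1 := by omega
        rw [this]
      by_cases hB1 : p ∈ B
      · have hS : p / e ∈ rowsOf e B res := h1.mp hB1
        by_cases hB2 : p - 1 ∈ B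
        · have hT : p / e ∈ rowsOf e B (res - 1) := h2.mp hB2
          simp [signStep, rstep, hB1, hB2, hS, hT, hpne]
        · have hT : p / e ∉ rowsOf e B (res - 1) := fun h => hB2 (h2.mpr h)
          simp [signStep, rstep, hB1, hB2, hS, hT, hpne]
      · have hS : p / e ∉ rowsOf e B res := fun h => hB1 (h1.mpr h)
        by_cases hB2 : p - 1 ∈ B
        · have hT : p / e ∈ rowsOf e B (res - 1) := h2.mp hB2
          simp only [signStep, rstep, hB1, hB2, hS, hT, hpne]
          cases hst : st.2 with
          | nil => simp [signStep, rstep, hB1, hB2, hS, hT, hpne, hst]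
          | cons hd tl => simp [signStep, rstep, hB1, hB2, hS, hT, hpne, hst]
        · have hT : p / e ∉ rowsOf e B (res - 1) := fun h => hB2 (h2.mpr h)
          simp [signStep, rstep, hB1, hB2, hS, hT, hpne]
    rw [hstep]

lemma posList_eq {e res : ℕ} (he : 0 < e) (hre : res < e) (B : Finset ℕ) :
    posList e B res
      = (List.range ((B.sup id + e + 2 + (e - 1 - res)) / e)).map (fun m => res + m * e) := by
  set N := B.sup id + e + 2 with hN
  set M := (N + (e - 1 - res)) / e with hM
  have key : ∀ m : ℕ, m < M ↔ res + m * e < N := by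
    intro m
    rw [hM]
    constructor
    · intro h
      have h2 : (m + 1) * e ≤ N + (e - 1 - res) := by
        have := (Nat.le_div_iff_mul_le he).1 (Nat.succ_le_of_lt h)
        exact this
      have h3 : (m + 1) * e = m * e + e := by ring
      omega
    · intro h
      have h2 : (m + 1) * e ≤ N + (e - 1 - res) := by
        have h3 : (m + 1) * e = m * e + e := by ring
        omega
      exact Nat.lt_of_succ_le ((Nat.le_div_iff_mul_le he).2 h2)
  have hperm : List.Perm (posList e B res) ((List.range M).map (fun m => res + m * e)) := by
    apply (List.perm_ext_iff_of_nodup ?_ ?_).2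
    · intro p
      unfold posList
      simp only [List.mem_filter, List.mem_range, List.mem_map, beq_iff_eq, ← hN]
      constructor
      · rintro ⟨hpN, hmod⟩
        have hd := Nat.div_add_mod p e
        have hc : e * (p / e) = (p / e) * e := Nat.mul_comm _ _
        have hpe : res + p / e * e = p := by omega
        exact ⟨p / e, (key _).2 (by omega), hpe⟩
      · rintro ⟨m, hm, rfl⟩
        exact ⟨(key m).1 hm, by rw [Nat.add_mul_mod_self_right, Nat.mod_eq_of_lt hre]⟩
    · exact List.Nodup.filter _ (List.nodup_range (n := N))
    · exact List.Nodup.map (runner_inj he res) (List.nodup_range (n := M))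
  have hs1 : List.Pairwise (· ≤ ·) (posList e B res) :=
    List.Pairwise.imp Nat.le_of_lt (List.Pairwise.filter _ (List.pairwise_lt_range (n := N)))
  have hs2 : List.Pairwise (· ≤ ·) ((List.range M).map (fun m => res + m * e)) := by
    apply List.Pairwise.imp Nat.le_of_lt
    refine List.pairwise_map.2 ?_
    refine (List.pairwise_lt_range (n := M)).imp ?_
    intro x y hxy
    have : x * e < y * e := (Nat.mul_lt_mul_right he).2 hxy
    omega
  exact List.Perm.eq_of_pairwise' hs1 hs2 hperm

lemma eps2_add {T S : Finset ℕ} {M : ℕ} (hS : ∀ m ∈ S, m < M) (hT : ∀ m ∈ T, m < M) (k : ℕ) :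
    eps2 T S (M + k) = eps2 T S M := by
  induction k with
  | zero => rfl
  | succ k ih =>
    rw [← ih]
    unfold eps2
    rw [show M + (k + 1) = (M + k) + 1 by omega, List.range_succ, List.foldl_append]
    have h1 : M + k ∉ S := fun h => by have := hS _ h; omega
    have h2 : M + k ∉ T := fun h => by have := hT _ h; omega
    simp [rstep, h1, h2]

lemma eps2_stable {T S : Finset ℕ} {M M' : ℕ} (hS : ∀ m ∈ S, m < M) (hT : ∀ m ∈ T, m < M)
    (hS' : ∀ m ∈ S, m < M') (hT' : ∀ m ∈ T, m < M') : eps2 T S M = eps2 T S M' := by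
  rcases Nat.le_total M M' with h | h
  · rw [show M' = M + (M' - M) by omega, eps2_add hS hT]
  · rw [show M = M' + (M - M') by omega, eps2_add hS' hT']

lemma epsB_eq_eps2 {e res : ℕ} (he : 0 < e) (h0 : 0 < res) (hre : res < e) (B : Finset ℕ)
    (hb1 : ∀ m ∈ rowsOf e B res, m < 10) (hb2 : ∀ m ∈ rowsOf e B (res - 1), m < 10) :
    epsB e B res = eps2 (rowsOf e B (res - 1)) (rowsOf e B res) 10 := by
  set N := B.sup id + e + 2 with hN
  set M := (N + (e - 1 - res)) / e with hM
  have key : ∀ m : ℕ, res + m * e < N → m < M := by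
    intro m h
    have h2 : (m + 1) * e ≤ N + (e - 1 - res) := by
      have h3 : (m + 1) * e = m * e + e := by ring
      omega
    exact Nat.lt_of_succ_le ((Nat.le_div_iff_mul_le he).2 h2)
  have hSM : ∀ m ∈ rowsOf e B res, m < M := by
    intro m hm
    apply key
    have := Finset.le_sup (f := id) ((mem_rowsOf he).1 hm)
    simp only [id] at this
    omega
  have hTM : ∀ m ∈ rowsOf e B (res - 1), m < M := by
    intro m hm
    apply key
    have := Finset.le_sup (f := id) ((mem_rowsOf he).1 hm)
    simp only [id] at this
    omega
  have hmem : ∀ p ∈ posList e B res, p % e = res := by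
    intro p hp
    unfold posList at hp
    simp only [List.mem_filter, beq_iff_eq] at hp
    exact hp.2
  have hsim := sim he h0 hre B (posList e B res) hmem ([], [])
  have hmap : (posList e B res).map (· / e) = List.range M := by
    rw [posList_eq he hre B, List.map_map]
    rw [show ((· / e) ∘ fun m => res + m * e) = fun m : ℕ => (res + m * e) / e from rfl]
    have : ∀ m : ℕ, (res + m * e) / e = m := by
      intro m
      rw [Nat.add_mul_div_right _ _ he, Nat.div_eq_of_lt hre]
      exact Nat.zero_add m
    calc (List.range M).map (fun m : ℕ => (res + m * e) / e)
        = (List.range M).map id := List.map_congr_left (fun m _ => this m)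
      _ = List.range M := List.map_id _
  rw [hmap] at hsim
  have : epsB e B res = ((posList e B res).foldl (signStep B) ([], [])).2.length := rfl
  rw [this]
  have h2 := congrArg Prod.snd hsim
  simp only at h2
  rw [h2]
  exact eps2_stable hSM hTM hb1 hb2
lemma mem_lt_of_wRows {S : Finset ℕ} {m : ℕ} (hm : m ∈ S) : m < S.card + wRows S := by
  have h1 : ((Finset.range m).filter (fun q => q ∉ S)).card ≤ wRows S :=
    Finset.single_le_sum (f := fun m => ((Finset.range m).filter (fun q => q ∉ S)).card)
      (fun _ _ => Nat.zero_le _) hm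
  have h2 : ((Finset.range m).filter (fun q => q ∈ S)).card ≤ (S.erase m).card := by
    apply Finset.card_le_card
    intro q hq
    simp only [Finset.mem_filter, Finset.mem_range] at hq
    exact Finset.mem_erase.2 ⟨by omega, hq.2⟩
  have h3 : ((Finset.range m).filter (fun q => q ∈ S)).card
      + ((Finset.range m).filter (fun q => q ∉ S)).card = m := by
    rw [Finset.card_filter_add_card_filter_not, Finset.card_range]
  have h4 : (S.erase m).card = S.card - 1 := Finset.card_erase_of_mem hm
  have h5 : 0 < S.card := Finset.card_pos.2 ⟨m, hm⟩
  omega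

lemma rows_of_wzero {S : Finset ℕ} {c : ℕ} (hw : wRows S = 0) (hc : S.card = c) :
    S = Finset.range c := by
  have hdc : ∀ m ∈ S, ∀ k, k < m → k ∈ S := by
    intro m hm k hk
    have h0 : ((Finset.range m).filter (fun q => q ∉ S)).card = 0 :=
      Finset.sum_eq_zero_iff.1 hw m hm
    by_contra hk2
    have : k ∈ (Finset.range m).filter (fun q => q ∉ S) :=
      Finset.mem_filter.2 ⟨Finset.mem_range.2 hk, hk2⟩
    have := Finset.card_pos.2 ⟨k, this⟩
    omega
  have hsub : S ⊆ Finset.range c := by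
    intro m hm
    rw [Finset.mem_range]
    by_contra hmc
    have hins : insert m (Finset.range m) ⊆ S := by
      intro k hk
      rcases Finset.mem_insert.1 hk with rfl | hk
      · exact hm
      · exact hdc m hm k (Finset.mem_range.1 hk)
    have hcard := Finset.card_le_card hins
    rw [Finset.card_insert_of_notMem (by simp), Finset.card_range] at hcard
    omega
  exact Finset.eq_of_subset_of_card_le hsub (by rw [Finset.card_range, hc])
def L4 : List (Finset ℕ) := [{0,1,2,3}, {0,1,2,4}, {0,1,2,5}, {0,1,2,6}, {0,1,2,7},
  {0,1,3,4}, {0,1,3,5}, {0,1,3,6}, {0,1,4,5}, {0,2,3,4}, {0,2,3,5}, {1,2,3,4}]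
def L5 : List (Finset ℕ) := [{0,1,2,3,4}, {0,1,2,3,5}, {0,1,2,3,6}, {0,1,2,3,7}, {0,1,2,3,8},
  {0,1,2,4,5}, {0,1,2,4,6}, {0,1,2,4,7}, {0,1,2,5,6}, {0,1,3,4,5}, {0,1,3,4,6}, {0,2,3,4,5}]
def L6 : List (Finset ℕ) := [{0,1,2,3,4,5}, {0,1,2,3,4,6}, {0,1,2,3,4,7}, {0,1,2,3,4,8},
  {0,1,2,3,4,9}, {0,1,2,3,5,6}, {0,1,2,3,5,7}, {0,1,2,3,5,8}, {0,1,2,3,6,7}, {0,1,2,4,5,6},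
  {0,1,2,4,5,7}, {0,1,3,4,5,6}]

lemma mem_L4' : ∀ S ∈ Finset.powersetCard 4 (Finset.range 8), wRows S ≤ 4 → S ∈ L4 := by decide

set_option maxRecDepth 40000 in
lemma mem_L5' : ∀ S ∈ Finset.powersetCard 5 (Finset.range 9), wRows S ≤ 4 → S ∈ L5 := by decide
set_option maxRecDepth 100000 in
lemma mem_L6' : ∀ S ∈ Finset.powersetCard 6 (Finset.range 10), wRows S ≤ 4 → S ∈ L6 := by decide

lemma pair45 : ∀ T ∈ L4, ∀ S ∈ L5, 2 ≤ eps2 T S 10 → 2 ≤ wRows T + wRows S := by decide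
lemma pair45u : ∀ T ∈ L4, ∀ S ∈ L5, 2 ≤ eps2 T S 10 → wRows T + wRows S ≤ 2 →
    T = Finset.range 4 ∧ S = ({0,1,2,4,5} : Finset ℕ) := by decide
lemma pair56 : ∀ T ∈ L5, ∀ S ∈ L6, 2 ≤ eps2 T S 10 → 2 ≤ wRows T + wRows S := by decide
lemma pair56u : ∀ T ∈ L5, ∀ S ∈ L6, 2 ≤ eps2 T S 10 → wRows T + wRows S ≤ 2 →
    T = Finset.range 5 ∧ S = ({0,1,2,3,5,6} : Finset ℕ) := by decide
set_option maxRecDepth 100000 in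
lemma tripleL : ∀ T ∈ L4, ∀ S ∈ L5, ∀ U ∈ L6, wRows T + wRows S + wRows U ≤ 4 →
    ¬(2 ≤ eps2 T S 10 ∧ 2 ≤ eps2 S U 10) := by decide
lemma oneRunnerBeta_nil (c : ℕ) : oneRunnerBeta [] c = Finset.range c := by
  unfold oneRunnerBeta
  ext k
  simp only [Finset.mem_image, Finset.mem_range, List.getD_nil]
  constructor
  · rintro ⟨t, ht, rfl⟩; omega
  · intro hk; exact ⟨c - 1 - k, by omega, by omega⟩

lemma oneRB5 : oneRunnerBeta [1, 1] 5 = ({0, 1, 2, 4, 5} : Finset ℕ) := by decide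
lemma oneRB6 : oneRunnerBeta [1, 1] 6 = ({0, 1, 2, 3, 5, 6} : Finset ℕ) := by decide

lemma B_decomp {e : ℕ} (he : 0 < e) (B : Finset ℕ) :
    B = (Finset.range e).biUnion (fun i => (rowsOf e B i).image (fun m => i + m * e)) := by
  ext p
  simp only [Finset.mem_biUnion, Finset.mem_image, Finset.mem_range, mem_rowsOf he]
  constructor
  · intro hp
    have hd := Nat.div_add_mod p e
    have hc : e * (p / e) = (p / e) * e := Nat.mul_comm _ _
    have hpe : p % e + p / e * e = p := by omega
    exact ⟨p % e, Nat.mod_lt p he, p / e, by rwa [hpe], hpe⟩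
  · rintro ⟨i, hi, m, hm, rfl⟩; exact hm
/-- if a partition of the block
`⟨4^a, 5^{b−a}, 6^{c−b}, 5^{d−c}, 4^{e−d}⟩` is exceptional for both of its
`[4:1]`-pairs (via runners `a` and `b`), then `b − a ≥ 2` and the partition is
`⟨a_{(1,1)}, b_{(1,1)}⟩`. -/
theorem stmt13 (e a b c d : ℕ) (he : 3 ≤ e) (ha : 0 < a) (hab : a < b) (hbc : b < c)
    (hcd : c ≤ d) (hde : d ≤ e) (bd : ℕ → ℕ)
    (hbd : bd = fun i => if i < a then 4 else if i < b then 5 else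
      if i < c then 6 else if i < d then 5 else 4)
    (r : ℕ) (hr : r = (Finset.range e).sum bd)
    (lam : AbacusPartition) (hlam : inBlock e bd 4 lam)
    (B : Finset ℕ) (hB : B = lam.betaSet r)
    (hexc : 2 ≤ epsB e B a ∧ 2 ≤ epsB e B b) :
    a + 2 ≤ b ∧ B = display e bd (fun m => if m = a ∨ m = b then [1, 1] else []) := by
  have he0 : 0 < e := by omega
  have hae : a < e := by omega
  have hbe : b < e := by omega
  obtain ⟨hlen, hcnt, hwt⟩ := hlam
  rw [← hr, ← hB] at hcnt hwt
  have hws : ∑ i ∈ Finset.range e, wRows (rowsOf e B i) = 4 := by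
    rw [← weight_decomp he0 B]; exact hwt
  have hwle : ∀ i, i < e → wRows (rowsOf e B i) ≤ 4 := by
    intro i hi
    have h1 : wRows (rowsOf e B i) ≤ ∑ j ∈ Finset.range e, wRows (rowsOf e B j) :=
      Finset.single_le_sum (f := fun j => wRows (rowsOf e B j))
        (fun _ _ => Nat.zero_le _) (Finset.mem_range.2 hi)
    omega
  have hcard : ∀ i, i < e → (rowsOf e B i).card = bd i := by
    intro i hi; rw [card_rowsOf he0 hi B]; exact hcnt i hi
  have hbdle : ∀ i, bd i ≤ 6 := by
    intro i; rw [hbd]; simp only; split_ifs <;> omega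
  have hbd4 : bd (a - 1) = 4 := by
    rw [hbd]; simp only; rw [if_pos (show a - 1 < a by omega)]
  have hbd5 : bd a = 5 := by
    rw [hbd]; simp only; rw [if_neg (by omega), if_pos hab]
  have hbd5' : bd (b - 1) = 5 := by
    rw [hbd]; simp only; rw [if_neg (by omega), if_pos (by omega)]
  have hbd6 : bd b = 6 := by
    rw [hbd]; simp only; rw [if_neg (by omega), if_neg (by omega), if_pos hbc]
  have hbnd : ∀ i, i < e → ∀ m ∈ rowsOf e B i, m < 10 := by
    intro i hi m hm
    have h1 := mem_lt_of_wRows hm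
    have h2 := hwle i hi
    have h3 := hcard i hi
    have h4 := hbdle i
    omega
  have hea : 2 ≤ eps2 (rowsOf e B (a - 1)) (rowsOf e B a) 10 := by
    rw [← epsB_eq_eps2 he0 ha hae B (hbnd a hae) (hbnd (a - 1) (by omega))]
    exact hexc.1
  have heb : 2 ≤ eps2 (rowsOf e B (b - 1)) (rowsOf e B b) 10 := by
    rw [← epsB_eq_eps2 he0 (by omega) hbe B (hbnd b hbe) (hbnd (b - 1) (by omega))]
    exact hexc.2
  have mTa : rowsOf e B (a - 1) ∈ L4 := by
    apply mem_L4' _ _ (hwle (a - 1) (by omega))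
    refine Finset.mem_powersetCard.2 ⟨?_, by rw [hcard (a - 1) (by omega), hbd4]⟩
    intro m hm
    have h1 := mem_lt_of_wRows hm
    have h2 := hwle (a - 1) (show a - 1 < e by omega)
    have h3 := hcard (a - 1) (show a - 1 < e by omega)
    rw [Finset.mem_range]; omega
  have mSa : rowsOf e B a ∈ L5 := by
    apply mem_L5' _ _ (hwle a hae)
    refine Finset.mem_powersetCard.2 ⟨?_, by rw [hcard a hae, hbd5]⟩
    intro m hm
    have h1 := mem_lt_of_wRows hm
    have h2 := hwle a hae
    have h3 := hcard a hae
    rw [Finset.mem_range]; omega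
  have mTb : rowsOf e B (b - 1) ∈ L5 := by
    apply mem_L5' _ _ (hwle (b - 1) (by omega))
    refine Finset.mem_powersetCard.2 ⟨?_, by rw [hcard (b - 1) (by omega), hbd5']⟩
    intro m hm
    have h1 := mem_lt_of_wRows hm
    have h2 := hwle (b - 1) (show b - 1 < e by omega)
    have h3 := hcard (b - 1) (show b - 1 < e by omega)
    rw [Finset.mem_range]; omega
  have mSb : rowsOf e B b ∈ L6 := by
    apply mem_L6' _ _ (hwle b hbe)
    refine Finset.mem_powersetCard.2 ⟨?_, by rw [hcard b hbe, hbd6]⟩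
    intro m hm
    have h1 := mem_lt_of_wRows hm
    have h2 := hwle b hbe
    have h3 := hcard b hbe
    rw [Finset.mem_range]; omega
  have hb2 : a + 2 ≤ b := by
    by_contra hcon
    have hb1 : b = a + 1 := by omega
    have hTb : rowsOf e B (b - 1) = rowsOf e B a := by
      rw [show b - 1 = a by omega]
    rw [hTb] at heb
    have hsum : wRows (rowsOf e B (a - 1)) + wRows (rowsOf e B a) + wRows (rowsOf e B b) ≤ 4 := by
      have hsub : ({a - 1, a, b} : Finset ℕ) ⊆ Finset.range e := by
        intro x hx
        simp only [Finset.mem_insert, Finset.mem_singleton] at hx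
        rcases hx with rfl | rfl | rfl <;> (exact Finset.mem_range.2 (by omega))
      have hle := Finset.sum_le_sum_of_subset (f := fun i => wRows (rowsOf e B i)) hsub
      rw [hws] at hle
      rw [Finset.sum_insert (by simp; omega), Finset.sum_insert (by simp; omega),
        Finset.sum_singleton] at hle
      omega
    exact tripleL _ mTa _ mSa _ mSb hsum ⟨hea, heb⟩
  have hsum4 : wRows (rowsOf e B (a - 1)) + wRows (rowsOf e B a)
      + (wRows (rowsOf e B (b - 1)) + wRows (rowsOf e B b)) ≤ 4 := by
    have hsub : ({a - 1, a, b - 1, b} : Finset ℕ) ⊆ Finset.range e := by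
      intro x hx
      simp only [Finset.mem_insert, Finset.mem_singleton] at hx
      rcases hx with rfl | rfl | rfl | rfl <;> (exact Finset.mem_range.2 (by omega))
    have hle := Finset.sum_le_sum_of_subset (f := fun i => wRows (rowsOf e B i)) hsub
    rw [hws] at hle
    rw [Finset.sum_insert (by simp; omega), Finset.sum_insert (by simp; omega),
      Finset.sum_insert (by simp; omega), Finset.sum_singleton] at hle
    omega
  have h2a := pair45 _ mTa _ mSa hea
  have h2b := pair56 _ mTb _ mSb heb
  obtain ⟨hTaeq, hSaeq⟩ := pair45u _ mTa _ mSa hea (by omega)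
  obtain ⟨hTbeq, hSbeq⟩ := pair56u _ mTb _ mSb heb (by omega)
  have hzero : ∀ i, i < e → i ≠ a - 1 → i ≠ a → i ≠ b - 1 → i ≠ b →
      wRows (rowsOf e B i) = 0 := by
    intro i hi h1 h2 h3 h4
    have hsub : ({i, a - 1, a, b - 1, b} : Finset ℕ) ⊆ Finset.range e := by
      intro x hx
      simp only [Finset.mem_insert, Finset.mem_singleton] at hx
      rcases hx with rfl | rfl | rfl | rfl | rfl <;> (exact Finset.mem_range.2 (by omega))
    have hle := Finset.sum_le_sum_of_subset (f := fun j => wRows (rowsOf e B j)) hsub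
    rw [hws] at hle
    rw [Finset.sum_insert (by simp; omega), Finset.sum_insert (by simp; omega),
      Finset.sum_insert (by simp; omega), Finset.sum_insert (by simp; omega),
      Finset.sum_singleton] at hle
    omega
  refine ⟨hb2, ?_⟩
  rw [B_decomp he0 B]
  unfold display
  apply Finset.biUnion_congr rfl
  intro i hi
  rw [Finset.mem_range] at hi
  congr 1
  show rowsOf e B i = oneRunnerBeta (if i = a ∨ i = b then [1, 1] else []) (bd i)
  by_cases hia : i = a
  · subst hia
    rw [if_pos (Or.inl rfl), hbd5, oneRB5, hSaeq]
  · by_cases hib : i = b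
    · subst hib
      rw [if_pos (Or.inr rfl), hbd6, oneRB6, hSbeq]
    · rw [if_neg (by tauto), oneRunnerBeta_nil]
      by_cases hia1 : i = a - 1
      · subst hia1; rw [hTaeq, hbd4]
      · by_cases hib1 : i = b - 1
        · subst hib1; rw [hTbeq, hbd5']
        · exact rows_of_wzero (hzero i hi hia1 hia hib1 hib) (hcard i hi)
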